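/- Duality of treeplex norms: for a TFSDP with strategy polytope Q and kernel polytope Y over terminals E, the norms ‖u‖_{Δ,1} = sup_{y∈Y}⟨|u|,y⟩ and ‖u‖_{Δ,∞} = sup_{x∈Q}⟨|u|,x⟩ are dual to each other: for all u ∈ ℝ^E, sup_{v ≠ 0} ⟨u,v⟩/‖v‖_{Δ,1} = ‖u‖_{Δ,∞}. -/

import Mathlib

/-- A tree-form sequential decision process (TFSDP), modeled as a finite rooted tree whose
nodes are either decision points (`isDec = true`, the player picks one of the `k` actions) or
observation points (`isDec = false`, with `k` children; `k = 0` means a terminal). -/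
inductive GTree : Type where
  | node (isDec : Bool) (k : ℕ) (children : Fin k → GTree) : GTree

namespace GTree

/-- The set of points (decision points and sequences) of the tree. -/
def Pts : GTree → Type
  | .node _ k c => Unit ⊕ ((i : Fin k) × Pts (c i))

/-- The root point of a tree. -/
def root : (t : GTree) → Pts t
  | .node _ _ _ => Sum.inl ()

def ptsFintype : (t : GTree) → Fintype (Pts t)
  | .node _ k c =>
    haveI : ∀ i, Fintype (Pts (c i)) := fun i => ptsFintype (c i)
    inferInstanceAs (Fintype (Unit ⊕ ((i : Fin k) × Pts (c i))))

attribute [instance] ptsFintype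

/-- `isLeaf t p` holds when `p` is a terminal observation point. -/
def isLeaf : (t : GTree) → Pts t → Bool
  | .node isDec k _, Sum.inl _ => !isDec && k == 0
  | .node _ _ c, Sum.inr ⟨i, p⟩ => isLeaf (c i) p

/-- Sequence-form flow constraints for strategies: at a decision point the value splits over the
actions, at an observation point each child keeps the value of its parent. -/
def flowQ : (t : GTree) → (Pts t → ℝ) → Prop
  | .node true _ c, x =>
      (x (Sum.inl ()) = ∑ i, x (Sum.inr ⟨i, root (c i)⟩)) ∧
      ∀ i, flowQ (c i) (fun p => x (Sum.inr ⟨i, p⟩))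
  | .node false _ c, x =>
      (∀ i, x (Sum.inr ⟨i, root (c i)⟩) = x (Sum.inl ())) ∧
      ∀ i, flowQ (c i) (fun p => x (Sum.inr ⟨i, p⟩))

/-- Flow constraints for transition kernels: at a decision point each child keeps the value of
its parent, at a non-terminal observation point the value splits over the children. -/
def flowY : (t : GTree) → (Pts t → ℝ) → Prop
  | .node true _ c, y =>
      (∀ i, y (Sum.inr ⟨i, root (c i)⟩) = y (Sum.inl ())) ∧
      ∀ i, flowY (c i) (fun p => y (Sum.inr ⟨i, p⟩))
  | .node false k c, y =>
      (k ≠ 0 → y (Sum.inl ()) = ∑ i, y (Sum.inr ⟨i, root (c i)⟩)) ∧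
      ∀ i, flowY (c i) (fun p => y (Sum.inr ⟨i, p⟩))

/-- The (extended) sequence-form strategy polytope `Q̂`. -/
def memQ (t : GTree) (x : Pts t → ℝ) : Prop :=
  flowQ t x ∧ x (root t) = 1 ∧ ∀ p, x p ∈ Set.Icc (0 : ℝ) 1

/-- The (extended) transition-kernel polytope `Ŷ`. -/
def memY (t : GTree) (y : Pts t → ℝ) : Prop :=
  flowY t y ∧ y (root t) = 1 ∧ ∀ p, y p ∈ Set.Icc (0 : ℝ) 1

/-- Well-formedness: every decision point offers at least one action. -/
def wf : GTree → Prop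
  | .node isDec k c => (isDec = true → 0 < k) ∧ ∀ i, wf (c i)

/-- The leaf count `w(h)`: 1 at terminals, max over actions at decision points, sum over
children at non-terminal observation points. -/
def leafCount : GTree → ℕ
  | .node true _ c => Finset.univ.sup fun i => leafCount (c i)
  | .node false 0 _ => 1
  | .node false (_ + 1) c => ∑ i, leafCount (c i)

/-- The tree size `‖Q‖₁`: maximum number of observation points reachable by a pure strategy. -/
def treeSize : GTree → ℕ
  | .node true _ c => Finset.univ.sup fun i => treeSize (c i)
  | .node false _ c => 1 + ∑ i, treeSize (c i)

/-- The size of the largest action set. -/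
def maxA : GTree → ℕ
  | .node true k c => max k (Finset.univ.sup fun i => maxA (c i))
  | .node false _ c => Finset.univ.sup fun i => maxA (c i)

/-- The type of reduced normal-form (pure) strategies: pick one action at each reachable
decision point. -/
def Strat : GTree → Type
  | .node true k c => (i : Fin k) × Strat (c i)
  | .node false k c => (i : Fin k) → Strat (c i)

/-- The sum of a vector over the terminal observation points. -/
noncomputable def leafSum (t : GTree) (u : Pts t → ℝ) : ℝ :=
  ∑ p : Pts t, if isLeaf t p then u p else 0

/-- The sum of a vector over all observation points (sequences). -/
noncomputable def obsSum : (t : GTree) → (Pts t → ℝ) → ℝ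
  | .node true _ c, x => ∑ i, obsSum (c i) (fun p => x (Sum.inr ⟨i, p⟩))
  | .node false _ c, x => x (Sum.inl ()) + ∑ i, obsSum (c i) (fun p => x (Sum.inr ⟨i, p⟩))

/-- No observation point has exactly one child. -/
def noSingle : GTree → Prop
  | .node isDec k c => (isDec = false → k ≠ 1) ∧ ∀ i, noSingle (c i)

/-- The `y`-weighted dilated entropy
`∑_{j ∈ J} ∑_{a ∈ A_j} y[ja] * x[ja] * ln (x[ja] / x[p_j])`. -/
noncomputable def dilEnt : (t : GTree) → (Pts t → ℝ) → (Pts t → ℝ) → ℝ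
  | .node true _ c, x, y =>
      ∑ i, (y (Sum.inr ⟨i, root (c i)⟩) * x (Sum.inr ⟨i, root (c i)⟩) *
              Real.log (x (Sum.inr ⟨i, root (c i)⟩) / x (Sum.inl ())) +
            dilEnt (c i) (fun p => x (Sum.inr ⟨i, p⟩)) (fun p => y (Sum.inr ⟨i, p⟩)))
  | .node false _ c, x, y =>
      ∑ i, dilEnt (c i) (fun p => x (Sum.inr ⟨i, p⟩)) (fun p => y (Sum.inr ⟨i, p⟩))

/-! ### Auxiliary development -/

/-- Leaf-restricted inner product. -/
noncomputable def D (t : GTree) (f x : Pts t → ℝ) : ℝ :=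
  ∑ p : Pts t, if isLeaf t p then f p * x p else 0

lemma sum_pts (b : Bool) (k : ℕ) (c : Fin k → GTree) (g : Pts (.node b k c) → ℝ) :
    ∑ p : Pts (.node b k c), g p =
      g (Sum.inl ()) + ∑ i, ∑ q : Pts (c i), g (Sum.inr ⟨i, q⟩) := by
  rw [show (∑ p : Pts (.node b k c), g p) =
    ∑ p : Unit ⊕ ((i : Fin k) × Pts (c i)), g p from rfl]
  refine (Fintype.sum_sum_type (f := fun p : Unit ⊕ ((i : Fin k) × Pts (c i)) => g p)).trans ?_
  simp [Finset.sum_sigma']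

lemma D_node (b : Bool) (k : ℕ) (c : Fin k → GTree) (f x : Pts (.node b k c) → ℝ) :
    D (.node b k c) f x =
      (if (!b && k == 0) then f (Sum.inl ()) * x (Sum.inl ()) else 0) +
      ∑ i, D (c i) (fun p => f (Sum.inr ⟨i, p⟩)) (fun p => x (Sum.inr ⟨i, p⟩)) := by
  rw [D, sum_pts]
  rfl

/-- Recursive `∞`-treeplex norm. -/
noncomputable def NinfR : (t : GTree) → (Pts t → ℝ) → ℝ
  | .node true _ c, u => ⨆ i, NinfR (c i) (fun p => u (Sum.inr ⟨i, p⟩))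
  | .node false 0 _, u => |u (Sum.inl ())|
  | .node false (_ + 1) c, u => ∑ i, NinfR (c i) (fun p => u (Sum.inr ⟨i, p⟩))

/-- Recursive `1`-treeplex norm. -/
noncomputable def N1R : (t : GTree) → (Pts t → ℝ) → ℝ
  | .node true _ c, u => ∑ i, N1R (c i) (fun p => u (Sum.inr ⟨i, p⟩))
  | .node false 0 _, u => |u (Sum.inl ())|
  | .node false (_ + 1) c, u => ⨆ i, N1R (c i) (fun p => u (Sum.inr ⟨i, p⟩))

lemma le_fin_ciSup {k : ℕ} (f : Fin k → ℝ) (i : Fin k) : f i ≤ ⨆ j, f j :=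
  le_ciSup (Set.Finite.bddAbove (Set.finite_range f)) i

lemma fin_ciSup_nonneg {k : ℕ} {f : Fin k → ℝ} (h : ∀ i, 0 ≤ f i) : 0 ≤ ⨆ i, f i :=
  Real.iSup_nonneg h

lemma fin_ciSup_le {k : ℕ} {f : Fin k → ℝ} {b : ℝ} (hb : 0 ≤ b) (h : ∀ i, f i ≤ b) :
    (⨆ i, f i) ≤ b := by
  cases k with
  | zero =>
    have : (⨆ i : Fin 0, f i) = 0 := by
      rw [iSup, Set.range_eq_empty, Real.sSup_empty]
    rw [this]; exact hb
  | succ n => exact ciSup_le h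

lemma fin_ciSup_eq_max {k : ℕ} (hk : 0 < k) (f : Fin k → ℝ) :
    ∃ i, (⨆ j, f j) = f i ∧ ∀ j, f j ≤ f i := by
  haveI : Nonempty (Fin k) := ⟨⟨0, hk⟩⟩
  obtain ⟨i, hi⟩ := Finite.exists_max f
  exact ⟨i, le_antisymm (ciSup_le hi) (le_fin_ciSup f i), hi⟩

lemma NinfR_nonneg : ∀ (t : GTree) (u : Pts t → ℝ), 0 ≤ NinfR t u
  | .node true k c, u => fin_ciSup_nonneg fun i => NinfR_nonneg (c i) _
  | .node false 0 _, u => abs_nonneg _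
  | .node false (n + 1) c, u => Finset.sum_nonneg fun i _ => NinfR_nonneg (c i) _

lemma N1R_nonneg : ∀ (t : GTree) (u : Pts t → ℝ), 0 ≤ N1R t u
  | .node true k c, u => Finset.sum_nonneg fun i _ => N1R_nonneg (c i) _
  | .node false 0 _, u => abs_nonneg _
  | .node false (n + 1) c, u => fin_ciSup_nonneg fun i => N1R_nonneg (c i) _


lemma flowQ_zero : ∀ t : GTree, flowQ t (fun _ => 0)
  | .node true _ c => ⟨by simp, fun i => flowQ_zero (c i)⟩
  | .node false _ c => ⟨fun _ => rfl, fun i => flowQ_zero (c i)⟩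

lemma flowY_zero : ∀ t : GTree, flowY t (fun _ => 0)
  | .node true _ c => ⟨fun _ => rfl, fun i => flowY_zero (c i)⟩
  | .node false _ c => ⟨fun _ => by simp, fun i => flowY_zero (c i)⟩

lemma D_zero (t : GTree) (f : Pts t → ℝ) : D t f (fun _ => 0) = 0 := by
  simp [D]

lemma NinfR_abs : ∀ (t : GTree) (u : Pts t → ℝ),
    NinfR t (fun p => |u p|) = NinfR t u
  | .node true _ c, u => by
      rw [NinfR, NinfR]; exact congrArg _ (funext fun i => NinfR_abs (c i) _)
  | .node false 0 _, u => by rw [NinfR, NinfR, abs_abs]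
  | .node false (_ + 1) c, u => by
      rw [NinfR, NinfR]; exact Finset.sum_congr rfl fun i _ => NinfR_abs (c i) _

lemma N1R_abs : ∀ (t : GTree) (u : Pts t → ℝ),
    N1R t (fun p => |u p|) = N1R t u
  | .node true _ c, u => by
      rw [N1R, N1R]; exact Finset.sum_congr rfl fun i _ => N1R_abs (c i) _
  | .node false 0 _, u => by rw [N1R, N1R, abs_abs]
  | .node false (_ + 1) c, u => by
      rw [N1R, N1R]; exact congrArg _ (funext fun i => N1R_abs (c i) _)

/-- L1: upper bound over the strategy polytope. -/
lemma D_le_NinfR : ∀ (t : GTree) (u x : Pts t → ℝ), flowQ t x → (∀ p, 0 ≤ x p) →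
    D t u x ≤ NinfR t u * x (root t)
  | .node true k c, u, x, hf, hx => by
    obtain ⟨hroot, hch⟩ := hf
    rw [D_node, NinfR]
    rw [if_neg (by simp), zero_add]
    calc ∑ i, D (c i) (fun p => u (Sum.inr ⟨i, p⟩)) (fun p => x (Sum.inr ⟨i, p⟩))
        ≤ ∑ i, NinfR (c i) (fun p => u (Sum.inr ⟨i, p⟩)) * x (Sum.inr ⟨i, root (c i)⟩) :=
          Finset.sum_le_sum fun i _ => D_le_NinfR (c i) _ _ (hch i) (fun p => hx _)
      _ ≤ ∑ i, (⨆ j, NinfR (c j) (fun p => u (Sum.inr ⟨j, p⟩))) * x (Sum.inr ⟨i, root (c i)⟩) :=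
          Finset.sum_le_sum fun i _ => mul_le_mul_of_nonneg_right
            (le_fin_ciSup (fun j => NinfR (c j) (fun p => u (Sum.inr ⟨j, p⟩))) i) (hx _)
      _ = (⨆ j, NinfR (c j) (fun p => u (Sum.inr ⟨j, p⟩))) * x (Sum.inl ()) := by
          rw [← Finset.mul_sum, ← hroot]
  | .node false 0 c, u, x, hf, hx => by
    rw [D_node, NinfR]
    simp only [Bool.not_false, Bool.true_and]
    norm_num
    exact mul_le_mul_of_nonneg_right (le_abs_self _) (hx _)
  | .node false (n + 1) c, u, x, hf, hx => by
    obtain ⟨hroot, hch⟩ := hf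
    rw [D_node, NinfR]
    rw [if_neg (by simp), zero_add]
    calc ∑ i, D (c i) (fun p => u (Sum.inr ⟨i, p⟩)) (fun p => x (Sum.inr ⟨i, p⟩))
        ≤ ∑ i, NinfR (c i) (fun p => u (Sum.inr ⟨i, p⟩)) * x (Sum.inr ⟨i, root (c i)⟩) :=
          Finset.sum_le_sum fun i _ => D_le_NinfR (c i) _ _ (hch i) (fun p => hx _)
      _ = (∑ i, NinfR (c i) (fun p => u (Sum.inr ⟨i, p⟩))) * x (Sum.inl ()) := by
          rw [Finset.sum_mul]
          exact Finset.sum_congr rfl fun i _ => by rw [hroot i]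

/-- L3: upper bound over the kernel polytope. -/
lemma D_le_N1R : ∀ (t : GTree) (v y : Pts t → ℝ), flowY t y → (∀ p, 0 ≤ y p) →
    D t v y ≤ N1R t v * y (root t)
  | .node true k c, v, y, hf, hy => by
    obtain ⟨hroot, hch⟩ := hf
    rw [D_node, N1R]
    rw [if_neg (by simp), zero_add]
    calc ∑ i, D (c i) (fun p => v (Sum.inr ⟨i, p⟩)) (fun p => y (Sum.inr ⟨i, p⟩))
        ≤ ∑ i, N1R (c i) (fun p => v (Sum.inr ⟨i, p⟩)) * y (Sum.inr ⟨i, root (c i)⟩) :=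
          Finset.sum_le_sum fun i _ => D_le_N1R (c i) _ _ (hch i) (fun p => hy _)
      _ = (∑ i, N1R (c i) (fun p => v (Sum.inr ⟨i, p⟩))) * y (Sum.inl ()) := by
          rw [Finset.sum_mul]
          exact Finset.sum_congr rfl fun i _ => by rw [hroot i]
  | .node false 0 c, v, y, hf, hy => by
    rw [D_node, N1R]
    simp only [Bool.not_false, Bool.true_and]
    norm_num
    exact mul_le_mul_of_nonneg_right (le_abs_self _) (hy _)
  | .node false (n + 1) c, v, y, hf, hy => by
    obtain ⟨hroot, hch⟩ := hf
    rw [D_node, N1R]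
    rw [if_neg (by simp), zero_add]
    calc ∑ i, D (c i) (fun p => v (Sum.inr ⟨i, p⟩)) (fun p => y (Sum.inr ⟨i, p⟩))
        ≤ ∑ i, N1R (c i) (fun p => v (Sum.inr ⟨i, p⟩)) * y (Sum.inr ⟨i, root (c i)⟩) :=
          Finset.sum_le_sum fun i _ => D_le_N1R (c i) _ _ (hch i) (fun p => hy _)
      _ ≤ ∑ i, (⨆ j, N1R (c j) (fun p => v (Sum.inr ⟨j, p⟩))) * y (Sum.inr ⟨i, root (c i)⟩) :=
          Finset.sum_le_sum fun i _ => mul_le_mul_of_nonneg_right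
            (le_fin_ciSup (fun j => N1R (c j) (fun p => v (Sum.inr ⟨j, p⟩))) i) (hy _)
      _ = (⨆ j, N1R (c j) (fun p => v (Sum.inr ⟨j, p⟩))) * y (Sum.inl ()) := by
          rw [← Finset.mul_sum, ← hroot (by omega)]

/-- L5: Hölder inequality between the two recursive norms. -/
lemma D_le_mul : ∀ (t : GTree) (u v : Pts t → ℝ), D t u v ≤ NinfR t u * N1R t v
  | .node true k c, u, v => by
    rw [D_node, NinfR, N1R]
    rw [if_neg (by simp), zero_add]
    calc ∑ i, D (c i) (fun p => u (Sum.inr ⟨i, p⟩)) (fun p => v (Sum.inr ⟨i, p⟩))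
        ≤ ∑ i, NinfR (c i) (fun p => u (Sum.inr ⟨i, p⟩)) *
            N1R (c i) (fun p => v (Sum.inr ⟨i, p⟩)) :=
          Finset.sum_le_sum fun i _ => D_le_mul (c i) _ _
      _ ≤ ∑ i, (⨆ j, NinfR (c j) (fun p => u (Sum.inr ⟨j, p⟩))) *
            N1R (c i) (fun p => v (Sum.inr ⟨i, p⟩)) :=
          Finset.sum_le_sum fun i _ => mul_le_mul_of_nonneg_right
            (le_fin_ciSup (fun j => NinfR (c j) (fun p => u (Sum.inr ⟨j, p⟩))) i) (N1R_nonneg _ _)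
      _ = _ := by rw [← Finset.mul_sum]
  | .node false 0 c, u, v => by
    rw [D_node, NinfR, N1R]
    norm_num
    calc u (Sum.inl ()) * v (Sum.inl ()) ≤ |u (Sum.inl ()) * v (Sum.inl ())| := le_abs_self _
      _ = |u (Sum.inl ())| * |v (Sum.inl ())| := abs_mul _ _
  | .node false (n + 1) c, u, v => by
    rw [D_node, NinfR, N1R]
    rw [if_neg (by simp), zero_add]
    calc ∑ i, D (c i) (fun p => u (Sum.inr ⟨i, p⟩)) (fun p => v (Sum.inr ⟨i, p⟩))
        ≤ ∑ i, NinfR (c i) (fun p => u (Sum.inr ⟨i, p⟩)) *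
            N1R (c i) (fun p => v (Sum.inr ⟨i, p⟩)) :=
          Finset.sum_le_sum fun i _ => D_le_mul (c i) _ _
      _ ≤ ∑ i, NinfR (c i) (fun p => u (Sum.inr ⟨i, p⟩)) *
            (⨆ j, N1R (c j) (fun p => v (Sum.inr ⟨j, p⟩))) :=
          Finset.sum_le_sum fun i _ => mul_le_mul_of_nonneg_left
            (le_fin_ciSup (fun j => N1R (c j) (fun p => v (Sum.inr ⟨j, p⟩))) i) (NinfR_nonneg _ _)
      _ = _ := by rw [← Finset.sum_mul]

/-- L6: the leaf product of a flow in `Q` and a flow in `Y` telescopes. -/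
lemma D_prod : ∀ (t : GTree) (x y : Pts t → ℝ), flowQ t x → flowY t y →
    D t x y = x (root t) * y (root t)
  | .node true k c, x, y, hfx, hfy => by
    obtain ⟨hrx, hcx⟩ := hfx
    obtain ⟨hry, hcy⟩ := hfy
    rw [D_node]
    rw [if_neg (by simp), zero_add]
    calc ∑ i, D (c i) (fun p => x (Sum.inr ⟨i, p⟩)) (fun p => y (Sum.inr ⟨i, p⟩))
        = ∑ i, x (Sum.inr ⟨i, root (c i)⟩) * y (Sum.inr ⟨i, root (c i)⟩) :=
          Finset.sum_congr rfl fun i _ => D_prod (c i) _ _ (hcx i) (hcy i)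
      _ = ∑ i, x (Sum.inr ⟨i, root (c i)⟩) * y (Sum.inl ()) :=
          Finset.sum_congr rfl fun i _ => by rw [hry i]
      _ = x (Sum.inl ()) * y (Sum.inl ()) := by rw [← Finset.sum_mul, ← hrx]
  | .node false 0 c, x, y, hfx, hfy => by
    rw [D_node]; norm_num; rfl
  | .node false (n + 1) c, x, y, hfx, hfy => by
    obtain ⟨hrx, hcx⟩ := hfx
    obtain ⟨hry, hcy⟩ := hfy
    rw [D_node]
    rw [if_neg (by simp), zero_add]
    calc ∑ i, D (c i) (fun p => x (Sum.inr ⟨i, p⟩)) (fun p => y (Sum.inr ⟨i, p⟩))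
        = ∑ i, x (Sum.inr ⟨i, root (c i)⟩) * y (Sum.inr ⟨i, root (c i)⟩) :=
          Finset.sum_congr rfl fun i _ => D_prod (c i) _ _ (hcx i) (hcy i)
      _ = ∑ i, x (Sum.inl ()) * y (Sum.inr ⟨i, root (c i)⟩) :=
          Finset.sum_congr rfl fun i _ => by rw [hrx i]
      _ = x (Sum.inl ()) * y (Sum.inl ()) := by rw [← Finset.mul_sum, ← hry (by omega)]

/-- L7: each leaf coordinate is dominated by the recursive 1-norm. -/
lemma abs_le_N1R : ∀ (t : GTree) (v : Pts t → ℝ) (p : Pts t), isLeaf t p = true →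
    |v p| ≤ N1R t v
  | .node true k c, v, Sum.inl (), hp => by simp [isLeaf] at hp
  | .node true k c, v, Sum.inr ⟨i, q⟩, hp => by
    rw [N1R]
    have h1 : |v (Sum.inr ⟨i, q⟩)| ≤ N1R (c i) (fun p => v (Sum.inr ⟨i, p⟩)) :=
      abs_le_N1R (c i) (fun p => v (Sum.inr ⟨i, p⟩)) q hp
    exact h1.trans (Finset.single_le_sum (f := fun j => N1R (c j) (fun p => v (Sum.inr ⟨j, p⟩)))
      (fun j _ => N1R_nonneg _ _) (Finset.mem_univ i))
  | .node false 0 c, v, Sum.inl (), hp => by rw [N1R]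
  | .node false 0 c, v, Sum.inr ⟨i, q⟩, hp => i.elim0
  | .node false (n + 1) c, v, Sum.inl (), hp => by simp [isLeaf] at hp
  | .node false (n + 1) c, v, Sum.inr ⟨i, q⟩, hp => by
    rw [N1R]
    exact (abs_le_N1R (c i) (fun p => v (Sum.inr ⟨i, p⟩)) q hp).trans
      (le_fin_ciSup (fun j => N1R (c j) (fun p => v (Sum.inr ⟨j, p⟩))) i)


/-- L2: the `∞`-recursive norm is attained on the strategy polytope. -/
lemma exists_memQ_max : ∀ (t : GTree), wf t → ∀ (u : Pts t → ℝ),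
    ∃ x, memQ t x ∧ D t (fun p => |u p|) x = NinfR t u
  | .node true k c, hwf, u => by
    obtain ⟨hk, hwfc⟩ := hwf
    obtain ⟨i0, hmax, _⟩ :=
      fin_ciSup_eq_max (hk rfl) (fun i => NinfR (c i) (fun p => u (Sum.inr ⟨i, p⟩)))
    obtain ⟨xs, hxs_mem, hxs_D⟩ :=
      exists_memQ_max (c i0) (hwfc i0) (fun p => u (Sum.inr ⟨i0, p⟩))
    set X : ∀ i : Fin k, Pts (c i) → ℝ :=
      Function.update (fun i _ => 0) i0 xs with hXdef
    have hXi0 : X i0 = xs := Function.update_self _ _ _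
    have hXne : ∀ j, j ≠ i0 → X j = fun _ => 0 := fun j hj => Function.update_of_ne hj _ _
    set x : Pts (.node true k c) → ℝ :=
      Sum.elim (fun _ => 1) (fun q => X q.1 q.2) with hxdef
    have h1 : x (Sum.inl ()) = ∑ i, x (Sum.inr ⟨i, root (c i)⟩) := by
      show (1 : ℝ) = ∑ i, X i (root (c i))
      rw [Finset.sum_eq_single i0
        (fun j _ hj => by rw [hXne j hj])
        (fun h => absurd (Finset.mem_univ i0) h)]
      rw [hXi0, hxs_mem.2.1]
    have h2 : ∀ i, flowQ (c i) (fun p => x (Sum.inr ⟨i, p⟩)) := by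
      intro i
      rcases eq_or_ne i i0 with h | h
      · subst h
        show flowQ (c i) (fun p => X i p)
        simp only [hXi0]
        exact hxs_mem.1
      · show flowQ (c i) (fun p => X i p)
        simp only [hXne i h]
        exact flowQ_zero (c i)
    have h4 : ∀ p, x p ∈ Set.Icc (0 : ℝ) 1 := by
      rintro (⟨⟩ | ⟨i, q⟩)
      · exact ⟨zero_le_one, le_refl 1⟩
      · show X i q ∈ Set.Icc (0 : ℝ) 1
        rcases eq_or_ne i i0 with h | h
        · subst h; rw [hXi0]; exact hxs_mem.2.2 q
        · rw [hXne i h]; exact ⟨le_refl 0, zero_le_one⟩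
    refine ⟨x, ⟨⟨h1, h2⟩, rfl, h4⟩, ?_⟩
    rw [D_node, if_neg (by simp), zero_add, NinfR]
    rw [Finset.sum_eq_single i0 ?h0 (fun h => absurd (Finset.mem_univ i0) h)]
    · show D (c i0) _ (fun p => X i0 p) = _
      simp only [hXi0]
      rw [hxs_D, hmax]
    · intro j _ hj
      show D (c j) _ (fun p => X j p) = 0
      simp only [hXne j hj]
      exact D_zero (c j) _
  | .node false 0 c, hwf, u => by
    refine ⟨fun _ => 1, ⟨⟨fun i => i.elim0, fun i => i.elim0⟩, rfl,
      fun p => ⟨zero_le_one, le_refl 1⟩⟩, ?_⟩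
    rw [D_node, NinfR]
    simp
  | .node false (n + 1) c, hwf, u => by
    obtain ⟨_, hwfc⟩ := hwf
    have H : ∀ i : Fin (n + 1), ∃ xi, memQ (c i) xi ∧
        D (c i) (fun p => |u (Sum.inr ⟨i, p⟩)|) xi = NinfR (c i) (fun p => u (Sum.inr ⟨i, p⟩)) :=
      fun i => exists_memQ_max (c i) (hwfc i) _
    choose Xs hmem hD using H
    set x : Pts (.node false (n + 1) c) → ℝ :=
      Sum.elim (fun _ => 1) (fun q => Xs q.1 q.2) with hxdef
    have h1 : ∀ i : Fin (n + 1), x (Sum.inr ⟨i, root (c i)⟩) = x (Sum.inl ()) := by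
      intro i; show Xs i (root (c i)) = 1; exact (hmem i).2.1
    have h2 : ∀ i, flowQ (c i) (fun p => x (Sum.inr ⟨i, p⟩)) := fun i => (hmem i).1
    have h4 : ∀ p, x p ∈ Set.Icc (0 : ℝ) 1 := by
      rintro (⟨⟩ | ⟨i, q⟩)
      · exact ⟨zero_le_one, le_refl 1⟩
      · exact (hmem i).2.2 q
    refine ⟨x, ⟨⟨h1, h2⟩, rfl, h4⟩, ?_⟩
    rw [D_node, if_neg (by simp), zero_add, NinfR]
    exact Finset.sum_congr rfl fun i _ => hD i

/-- L4: the `1`-recursive norm is attained on the kernel polytope. -/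
lemma exists_memY_max : ∀ (t : GTree) (v : Pts t → ℝ),
    ∃ y, memY t y ∧ D t (fun p => |v p|) y = N1R t v
  | .node true k c, v => by
    have H : ∀ i : Fin k, ∃ yi, memY (c i) yi ∧
        D (c i) (fun p => |v (Sum.inr ⟨i, p⟩)|) yi = N1R (c i) (fun p => v (Sum.inr ⟨i, p⟩)) :=
      fun i => exists_memY_max (c i) _
    choose Ys hmem hD using H
    set y : Pts (.node true k c) → ℝ :=
      Sum.elim (fun _ => 1) (fun q => Ys q.1 q.2) with hydef
    have h1 : ∀ i : Fin k, y (Sum.inr ⟨i, root (c i)⟩) = y (Sum.inl ()) := by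
      intro i; show Ys i (root (c i)) = 1; exact (hmem i).2.1
    have h2 : ∀ i, flowY (c i) (fun p => y (Sum.inr ⟨i, p⟩)) := fun i => (hmem i).1
    have h4 : ∀ p, y p ∈ Set.Icc (0 : ℝ) 1 := by
      rintro (⟨⟩ | ⟨i, q⟩)
      · exact ⟨zero_le_one, le_refl 1⟩
      · exact (hmem i).2.2 q
    refine ⟨y, ⟨⟨h1, h2⟩, rfl, h4⟩, ?_⟩
    rw [D_node, if_neg (by simp), zero_add, N1R]
    exact Finset.sum_congr rfl fun i _ => hD i
  | .node false 0 c, v => by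
    refine ⟨fun _ => 1, ⟨⟨fun h => absurd rfl h, fun i => i.elim0⟩, rfl,
      fun p => ⟨zero_le_one, le_refl 1⟩⟩, ?_⟩
    rw [D_node, N1R]
    simp
  | .node false (n + 1) c, v => by
    obtain ⟨i0, hmax, _⟩ :=
      fin_ciSup_eq_max (Nat.succ_pos n) (fun i => N1R (c i) (fun p => v (Sum.inr ⟨i, p⟩)))
    obtain ⟨ys, hys_mem, hys_D⟩ := exists_memY_max (c i0) (fun p => v (Sum.inr ⟨i0, p⟩))
    set Y : ∀ i : Fin (n + 1), Pts (c i) → ℝ :=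
      Function.update (fun i _ => 0) i0 ys with hYdef
    have hYi0 : Y i0 = ys := Function.update_self _ _ _
    have hYne : ∀ j, j ≠ i0 → Y j = fun _ => 0 := fun j hj => Function.update_of_ne hj _ _
    set y : Pts (.node false (n + 1) c) → ℝ :=
      Sum.elim (fun _ => 1) (fun q => Y q.1 q.2) with hydef
    have h1 : (n + 1 ≠ 0) → y (Sum.inl ()) = ∑ i, y (Sum.inr ⟨i, root (c i)⟩) := by
      intro _
      show (1 : ℝ) = ∑ i, Y i (root (c i))
      rw [Finset.sum_eq_single i0
        (fun j _ hj => by rw [hYne j hj])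
        (fun h => absurd (Finset.mem_univ i0) h)]
      rw [hYi0, hys_mem.2.1]
    have h2 : ∀ i, flowY (c i) (fun p => y (Sum.inr ⟨i, p⟩)) := by
      intro i
      rcases eq_or_ne i i0 with h | h
      · subst h
        show flowY (c i) (fun p => Y i p)
        simp only [hYi0]
        exact hys_mem.1
      · show flowY (c i) (fun p => Y i p)
        simp only [hYne i h]
        exact flowY_zero (c i)
    have h4 : ∀ p, y p ∈ Set.Icc (0 : ℝ) 1 := by
      rintro (⟨⟩ | ⟨i, q⟩)
      · exact ⟨zero_le_one, le_refl 1⟩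
      · show Y i q ∈ Set.Icc (0 : ℝ) 1
        rcases eq_or_ne i i0 with h | h
        · subst h; rw [hYi0]; exact hys_mem.2.2 q
        · rw [hYne i h]; exact ⟨le_refl 0, zero_le_one⟩
    refine ⟨y, ⟨⟨h1, h2⟩, rfl, h4⟩, ?_⟩
    rw [D_node, if_neg (by simp), zero_add, N1R]
    rw [Finset.sum_eq_single i0 ?h0 (fun h => absurd (Finset.mem_univ i0) h)]
    · show D (c i0) _ (fun p => Y i0 p) = _
      simp only [hYi0]
      rw [hys_D, hmax]
    · intro j _ hj
      show D (c j) _ (fun p => Y j p) = 0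
      simp only [hYne j hj]
      exact D_zero (c j) _

end GTree

open GTree in
/-- Duality of the treeplex norms: with
`‖u‖_{Δ,1} = sup_{y ∈ Y} ⟨|u|, y⟩` and `‖u‖_{Δ,∞} = sup_{x ∈ Q} ⟨|u|, x⟩` (inner products over
the terminal coordinates `E`), for every `u ∈ ℝ^E`,
`sup_{v ≠ 0} ⟨u, v⟩ / ‖v‖_{Δ,1} = ‖u‖_{Δ,∞}`. -/
theorem stmt16 (t : GTree) (hwf : wf t) (u : Pts t → ℝ) :
    let N1 : (Pts t → ℝ) → ℝ := fun v =>
      sSup ((fun y => ∑ p : Pts t, if isLeaf t p then |v p| * y p else 0) '' {y | memY t y})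
    let Ninf : (Pts t → ℝ) → ℝ := fun v =>
      sSup ((fun x => ∑ p : Pts t, if isLeaf t p then |v p| * x p else 0) '' {x | memQ t x})
    sSup ((fun v => (∑ p : Pts t, if isLeaf t p then u p * v p else 0) / N1 v)
        '' {v | ∃ p, isLeaf t p ∧ v p ≠ 0}) = Ninf u := by
  intro N1 Ninf
  -- identify N1 with the recursive norm
  have hN1 : ∀ w : Pts t → ℝ, N1 w = N1R t w := by
    intro w
    obtain ⟨y0, hy0, hy0D⟩ := exists_memY_max t w
    have hub : ∀ a ∈ (fun y => ∑ p : Pts t, if isLeaf t p then |w p| * y p else 0) ''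
        {y | memY t y}, a ≤ N1R t w := by
      rintro a ⟨y, hy, rfl⟩
      have h := D_le_N1R t (fun p => |w p|) y hy.1 (fun p => (hy.2.2 p).1)
      rw [hy.2.1, mul_one, N1R_abs] at h
      exact h
    show sSup _ = N1R t w
    apply le_antisymm (csSup_le ⟨_, Set.mem_image_of_mem _ (show y0 ∈ {y | memY t y} from hy0)⟩ hub)
    exact le_csSup ⟨N1R t w, hub⟩ ⟨y0, hy0, hy0D⟩
  -- identify Ninf with the recursive norm
  obtain ⟨xs, hxs, hxsD⟩ := exists_memQ_max t hwf u
  have hNinf : Ninf u = NinfR t u := by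
    have hub : ∀ a ∈ (fun x => ∑ p : Pts t, if isLeaf t p then |u p| * x p else 0) ''
        {x | memQ t x}, a ≤ NinfR t u := by
      rintro a ⟨x, hx, rfl⟩
      have h := D_le_NinfR t (fun p => |u p|) x hx.1 (fun p => (hx.2.2 p).1)
      rw [hx.2.1, mul_one, NinfR_abs] at h
      exact h
    show sSup _ = NinfR t u
    apply le_antisymm (csSup_le ⟨_, Set.mem_image_of_mem _ (show xs ∈ {x | memQ t x} from hxs)⟩ hub)
    exact le_csSup ⟨NinfR t u, hub⟩ ⟨xs, hxs, hxsD⟩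
  rw [hNinf]
  have hN1f : N1 = fun w => N1R t w := funext hN1
  rw [hN1f]
  -- the witness vector
  obtain ⟨y0, hy0, _⟩ := exists_memY_max t u
  set v : Pts t → ℝ := fun p => if u p < 0 then -xs p else xs p with hvdef
  have habs : ∀ p, |v p| = xs p := by
    intro p
    by_cases h : u p < 0 <;>
      simp [v, h, abs_of_nonneg (hxs.2.2 p).1]
  have hmulp : ∀ p, u p * v p = |u p| * xs p := by
    intro p
    by_cases h : u p < 0
    · simp only [v, if_pos h, abs_of_neg h]
      ring
    · simp only [v, if_neg h, abs_of_nonneg (not_lt.1 h)]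
  have hnum : (∑ p : Pts t, if isLeaf t p then u p * v p else 0) = NinfR t u := by
    rw [← hxsD]
    simp only [D]
    exact Finset.sum_congr rfl fun p _ => by rw [hmulp p]
  have hprod : ∀ y, memY t y → D t (fun p => |v p|) y = 1 := by
    intro y hy
    have h : D t (fun p => |v p|) y = D t xs y := by
      simp only [D]
      exact Finset.sum_congr rfl fun p _ => by rw [habs p]
    rw [h, D_prod t xs y hxs.1 hy.1, hxs.2.1, hy.2.1, mul_one]
  have hN1v : N1R t v = 1 := by
    obtain ⟨y1, hy1, hy1D⟩ := exists_memY_max t v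
    rw [← hy1D]
    exact hprod y1 hy1
  have hvmem : ∃ p, isLeaf t p ∧ v p ≠ 0 := by
    by_contra h
    push_neg at h
    have h0 : D t (fun p => |v p|) y0 = 0 := by
      simp only [D]
      apply Finset.sum_eq_zero
      intro p _
      by_cases hl : isLeaf t p
      · rw [if_pos hl, h p hl, abs_zero, zero_mul]
      · rw [if_neg hl]
    have h1 := hprod y0 hy0
    rw [h0] at h1
    norm_num at h1
  -- upper bound for the ratio set
  have hub : ∀ a ∈ (fun w => (∑ p : Pts t, if isLeaf t p then u p * w p else 0) / N1R t w)
      '' {w | ∃ p, isLeaf t p ∧ w p ≠ 0}, a ≤ NinfR t u := by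
    rintro a ⟨w, ⟨p, hl, hw⟩, rfl⟩
    show (∑ p : Pts t, if isLeaf t p then u p * w p else 0) / N1R t w ≤ NinfR t u
    have hpos : 0 < N1R t w := lt_of_lt_of_le (abs_pos.mpr hw) (abs_le_N1R t w p hl)
    rw [div_le_iff₀ hpos]
    exact D_le_mul t u w
  have hmem : NinfR t u ∈ (fun w => (∑ p : Pts t, if isLeaf t p then u p * w p else 0) /
      N1R t w) '' {w | ∃ p, isLeaf t p ∧ w p ≠ 0} := by
    refine ⟨v, hvmem, ?_⟩
    show (∑ p : Pts t, if isLeaf t p then u p * v p else 0) / N1R t v = NinfR t u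
    rw [hnum, hN1v, div_one]
  exact le_antisymm (csSup_le ⟨_, hmem⟩ hub) (le_csSup ⟨NinfR t u, hub⟩ hmem)
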